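/- Let F be a number field with odd class number h(F), let 𝔭₁ and 𝔭₂ be primary prime ideals of odd norm, write 𝔭₂^{h(F)} = (π₂) with π₂ primary and set k₂ = F(√π₂) with unit group E₂. Suppose 𝔭₁ splits in k₂ as 𝔭₁O_{k₂} = 𝔓₁𝔓₁'. Then (E₂/𝔓₁) = (E₂/𝔓₁'), i.e. every unit of k₂ is a quadratic residue modulo 𝔓₁ if and only if every unit of k₂ is a quadratic residue modulo 𝔓₁'. -/

import Mathlib

open NumberField
open scoped Classical

/-- The quadratic residue symbol `[α/𝔭] ∈ {±1}`, determined by Euler's congruence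
`[α/𝔭] ≡ α^((N𝔭 - 1)/2) (mod 𝔭)`. -/
noncomputable def quadResSym (F : Type*) [Field F] [NumberField F]
    (𝔭 : Ideal (𝓞 F)) (α : 𝓞 F) : ℤ :=
  if α ^ ((Ideal.absNorm 𝔭 - 1) / 2) - 1 ∈ 𝔭 then 1 else -1

/-- An ideal `𝔭` is primary if `[ε/𝔭] = 1` for every unit `ε`, i.e. `(E_F/𝔭) = +1`. -/
def IsPrimaryIdeal (F : Type*) [Field F] [NumberField F] (𝔭 : Ideal (𝓞 F)) : Prop :=
  ∀ ε : (𝓞 F)ˣ, quadResSym F 𝔭 (ε : 𝓞 F) = 1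

/-- An element of the ring of integers is primary if it is totally positive and
congruent to a square modulo 4. -/
def IsPrimaryElem (F : Type*) [Field F] [NumberField F] (α : 𝓞 F) : Prop :=
  (∀ φ : F →+* ℝ, 0 < φ (algebraMap (𝓞 F) F α)) ∧ ∃ ξ : 𝓞 F, (4 : 𝓞 F) ∣ α - ξ ^ 2

set_option maxHeartbeats 1000000 in
set_option synthInstance.maxHeartbeats 1000000 in
theorem normal_of_finrank_two' (F k : Type*) [Field F] [Field k] [Algebra F k]
    (h2 : Module.finrank F k = 2) : Normal F k := by
  have : FiniteDimensional F k := Module.finite_of_finrank_eq_succ h2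
  rw [normal_iff]
  intro x
  have hint : IsIntegral F x := IsIntegral.of_finite F x
  refine ⟨hint, ?_⟩
  set p := minpoly F x with hp
  have hple : p.natDegree ≤ 2 := h2 ▸ minpoly.natDegree_le x
  set φ := algebraMap F k
  set q := p.map φ with hq
  have hroot : q.IsRoot x := by
    show q.eval x = 0
    rw [hq, Polynomial.eval_map, ← Polynomial.aeval_def]
    exact minpoly.aeval F x
  have hfac : (Polynomial.X - Polynomial.C x) * (q /ₘ (Polynomial.X - Polynomial.C x)) = q :=
    (Polynomial.mul_divByMonic_eq_iff_isRoot).mpr hroot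
  rw [← hfac]
  refine Polynomial.Splits.mul (Polynomial.Splits.X_sub_C _) ?_
  apply Polynomial.Splits.of_natDegree_le_one
  have h1 : q.natDegree ≤ 2 := by
    simpa [q, Polynomial.natDegree_map] using hple
  have := Polynomial.natDegree_divByMonic q (Polynomial.monic_X_sub_C x)
  simp only [Polynomial.natDegree_X_sub_C] at this
  omega

set_option maxHeartbeats 1000000 in
set_option synthInstance.maxHeartbeats 1000000 in
theorem quadResSym_transfer' (k : Type*) [Field k] [NumberField k]
    (P P' : Ideal (𝓞 k)) (e : (𝓞 k) ≃+* (𝓞 k))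
    (h : Ideal.map (e : 𝓞 k →+* 𝓞 k) P = P')
    (hall : ∀ ε : (𝓞 k)ˣ, quadResSym k P (ε : 𝓞 k) = 1)
    (ε : (𝓞 k)ˣ) : quadResSym k P' (ε : 𝓞 k) = 1 := by
  have hnorm : Ideal.absNorm P' = Ideal.absNorm P := by
    rw [Ideal.absNorm_apply, Ideal.absNorm_apply, Submodule.cardQuot_apply,
      Submodule.cardQuot_apply]
    exact (Nat.card_congr (Ideal.quotientEquiv P P' e h.symm).toEquiv).symm
  have hmem : ∀ z : 𝓞 k, z ∈ P' ↔ e.symm z ∈ P := by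
    intro z
    have h2 : Ideal.map (e : 𝓞 k →+* 𝓞 k) P = Ideal.map e P := rfl
    rw [← h, h2, ← Ideal.comap_symm, Ideal.mem_comap]
  have hε := hall (Units.map (e.symm : 𝓞 k →* 𝓞 k) ε)
  unfold quadResSym at hε ⊢
  rw [hnorm, hmem]
  split_ifs at hε with hc
  simpa using hc

set_option maxHeartbeats 2000000 in
set_option synthInstance.maxHeartbeats 1000000 in
/-- If `𝔭₁, 𝔭₂` are primary prime ideals of odd norm in `F` (odd class number),
`𝔭₂^{h(F)} = (π₂)` with `π₂` primary, `k₂ = F(√π₂)`, and `𝔭₁ O_{k₂} = 𝔓₁ 𝔓₁'`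
splits, then `(E₂/𝔓₁) = (E₂/𝔓₁')`. -/
theorem unit_symbol_independent_of_conjugate
    (F : Type*) [Field F] [NumberField F]
    (hoddF : Odd (NumberField.classNumber F))
    (𝔭₁ 𝔭₂ : Ideal (𝓞 F)) (hp1 : 𝔭₁.IsPrime) (hp2 : 𝔭₂.IsPrime) (hne : 𝔭₁ ≠ 𝔭₂)
    (hN1 : Odd (Ideal.absNorm 𝔭₁)) (hN2 : Odd (Ideal.absNorm 𝔭₂))
    (hprim1 : IsPrimaryIdeal F 𝔭₁) (hprim2 : IsPrimaryIdeal F 𝔭₂)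
    (π₂ : 𝓞 F) (hπ₂ : IsPrimaryElem F π₂)
    (hgen2 : 𝔭₂ ^ NumberField.classNumber F = Ideal.span {π₂})
    (k₂ : Type*) [Field k₂] [NumberField k₂] [Algebra F k₂]
    (hdeg2 : Module.finrank F k₂ = 2)
    (β : k₂) (hβ : β ^ 2 = algebraMap F k₂ (algebraMap (𝓞 F) F π₂))  -- `k₂ = F(√π₂)`
    (𝔓₁ 𝔓₁' : Ideal (𝓞 k₂)) (hP1 : 𝔓₁.IsPrime) (hP1' : 𝔓₁'.IsPrime) (hPne : 𝔓₁ ≠ 𝔓₁')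
    (hsplit : Ideal.map (algebraMap (𝓞 F) (𝓞 k₂)) 𝔭₁ = 𝔓₁ * 𝔓₁')
    : (∀ ε : (𝓞 k₂)ˣ, quadResSym k₂ 𝔓₁ (ε : 𝓞 k₂) = 1) ↔
      (∀ ε : (𝓞 k₂)ˣ, quadResSym k₂ 𝔓₁' (ε : 𝓞 k₂) = 1) := by
  have hFD : FiniteDimensional F k₂ := Module.finite_of_finrank_eq_succ hdeg2
  haveI : Normal F k₂ := normal_of_finrank_two' F k₂ hdeg2
  haveI : IsGalois F k₂ := ⟨⟩
  -- the nontrivial automorphism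
  have hcard : Fintype.card (k₂ ≃ₐ[F] k₂) = 2 := by
    rw [← Nat.card_eq_fintype_card, IsGalois.card_aut_eq_finrank, hdeg2]
  obtain ⟨σ, hσ1⟩ := Fintype.exists_ne_of_one_lt_card (by omega) (1 : k₂ ≃ₐ[F] k₂)
  have hdich : ∀ τ : k₂ ≃ₐ[F] k₂, τ = 1 ∨ τ = σ := by
    intro τ
    by_contra hcon
    push_neg at hcon
    have hsub : ({1, σ, τ} : Finset (k₂ ≃ₐ[F] k₂)).card ≤ 2 :=
      hcard ▸ Finset.card_le_univ _
    rw [Finset.card_insert_of_notMem (by simp [hσ1.symm, Ne.symm hcon.1]),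
      Finset.card_insert_of_notMem (by simp [Ne.symm hcon.2]),
      Finset.card_singleton] at hsub
    omega
  have hσσ : σ * σ = 1 := by
    rcases hdich (σ * σ) with h | h
    · exact h
    · exact absurd (mul_right_cancel (h.trans (one_mul σ).symm)) hσ1
  -- the induced automorphism of 𝓞 k₂
  set E : (𝓞 k₂) ≃+* (𝓞 k₂) := RingOfIntegers.mapRingEquiv σ with hE
  have hEcoe : ∀ z : 𝓞 k₂, (algebraMap (𝓞 k₂) k₂) (E z) = σ (algebraMap (𝓞 k₂) k₂ z) :=
    fun z => rfl
  have hEcomm : ∀ r : 𝓞 F, E (algebraMap (𝓞 F) (𝓞 k₂) r) = algebraMap (𝓞 F) (𝓞 k₂) r := by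
    intro r
    apply RingOfIntegers.coe_injective
    rw [hEcoe]
    show σ (algebraMap F k₂ (algebraMap (𝓞 F) F r)) = algebraMap F k₂ (algebraMap (𝓞 F) F r)
    exact σ.commutes _
  -- basic nontriviality facts
  have hp1bot : 𝔭₁ ≠ ⊥ := by
    intro h
    rw [h, Ideal.absNorm_bot] at hN1
    simp [Nat.odd_iff] at hN1
  have hinjS : Function.Injective (algebraMap (𝓞 k₂) k₂) := RingOfIntegers.coe_injective
  have hinj : Function.Injective (algebraMap (𝓞 F) (𝓞 k₂)) := by
    intro a b hab
    have := congrArg (algebraMap (𝓞 k₂) k₂) hab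
    rw [← IsScalarTower.algebraMap_apply, ← IsScalarTower.algebraMap_apply] at this
    rw [IsScalarTower.algebraMap_apply (𝓞 F) F k₂, IsScalarTower.algebraMap_apply (𝓞 F) F k₂]
      at this
    exact RingOfIntegers.coe_injective
      ((algebraMap F k₂).injective this)
  have hmapbot : Ideal.map (algebraMap (𝓞 F) (𝓞 k₂)) 𝔭₁ ≠ ⊥ := by
    intro h
    exact hp1bot ((Ideal.map_eq_bot_iff_of_injective hinj).mp h)
  have hP1bot : 𝔓₁ ≠ ⊥ := by
    intro h
    apply hmapbot
    rw [hsplit, h]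
    simp
  have hP1'bot : 𝔓₁' ≠ ⊥ := by
    intro h
    apply hmapbot
    rw [hsplit, h]
    simp
  have hP1max : 𝔓₁.IsMaximal := hP1.isMaximal hP1bot
  have hP1'max : 𝔓₁'.IsMaximal := hP1'.isMaximal hP1'bot
  -- comap of 𝔓₁, 𝔓₁' over 𝔭₁
  have hle1 : Ideal.map (algebraMap (𝓞 F) (𝓞 k₂)) 𝔭₁ ≤ 𝔓₁ := by
    rw [hsplit]; exact Ideal.mul_le_left
  have hle1' : Ideal.map (algebraMap (𝓞 F) (𝓞 k₂)) 𝔭₁ ≤ 𝔓₁' := by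
    rw [hsplit]; exact Ideal.mul_le_right
  haveI := hP1.comap (algebraMap (𝓞 F) (𝓞 k₂))
  have hcom : Ideal.comap (algebraMap (𝓞 F) (𝓞 k₂)) 𝔓₁ = 𝔭₁ := by
    refine ((hp1.isMaximal hp1bot).eq_of_le ?_ ?_).symm
    · exact (hP1.comap (algebraMap (𝓞 F) (𝓞 k₂))).ne_top
    · exact le_trans Ideal.le_comap_map (Ideal.comap_mono hle1)
  -- the action of E on the ideals
  have hmapmap : Ideal.map (E : 𝓞 k₂ →+* 𝓞 k₂) (Ideal.map (algebraMap (𝓞 F) (𝓞 k₂)) 𝔭₁)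
      = Ideal.map (algebraMap (𝓞 F) (𝓞 k₂)) 𝔭₁ := by
    rw [Ideal.map_map]
    congr 1
    exact RingHom.ext fun r => hEcomm r
  have hmul : Ideal.map (E : 𝓞 k₂ →+* 𝓞 k₂) 𝔓₁ * Ideal.map (E : 𝓞 k₂ →+* 𝓞 k₂) 𝔓₁'
      = 𝔓₁ * 𝔓₁' := by
    rw [← Ideal.map_mul, ← hsplit, hmapmap, hsplit]
  have hmax_map : ∀ P : Ideal (𝓞 k₂), P.IsMaximal →
      (Ideal.map (E : 𝓞 k₂ →+* 𝓞 k₂) P).IsMaximal := by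
    intro P hP
    have h2 : Ideal.map (E : 𝓞 k₂ →+* 𝓞 k₂) P = Ideal.map E P := rfl
    rw [h2, ← Ideal.comap_symm]
    haveI := hP
    exact Ideal.comap_isMaximal_of_surjective (f := E.symm) E.symm.surjective
  have hmemE : ∀ (P : Ideal (𝓞 k₂)) (z : 𝓞 k₂),
      E z ∈ Ideal.map (E : 𝓞 k₂ →+* 𝓞 k₂) P ↔ z ∈ P := by
    intro P z
    have h2 : Ideal.map (E : 𝓞 k₂ →+* 𝓞 k₂) P = Ideal.map E P := rfl
    rw [h2, ← Ideal.comap_symm, Ideal.mem_comap, E.symm_apply_apply]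
  -- the key dichotomy
  have hd1 : Ideal.map (E : 𝓞 k₂ →+* 𝓞 k₂) 𝔓₁ = 𝔓₁ ∨
      Ideal.map (E : 𝓞 k₂ →+* 𝓞 k₂) 𝔓₁ = 𝔓₁' := by
    have hle : Ideal.map (E : 𝓞 k₂ →+* 𝓞 k₂) 𝔓₁ * Ideal.map (E : 𝓞 k₂ →+* 𝓞 k₂) 𝔓₁' ≤ 𝔓₁ := by
      rw [hmul]; exact Ideal.mul_le_left
    rcases hP1.mul_le.mp hle with h | h
    · exact Or.inl ((hmax_map _ hP1max).eq_of_le hP1.ne_top h)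
    · -- map E 𝔓₁' = 𝔓₁, so map E 𝔓₁ = 𝔓₁' by symmetry of product
      have h1 : Ideal.map (E : 𝓞 k₂ →+* 𝓞 k₂) 𝔓₁' = 𝔓₁ :=
        (hmax_map _ hP1'max).eq_of_le hP1.ne_top h
      have hle' : Ideal.map (E : 𝓞 k₂ →+* 𝓞 k₂) 𝔓₁ * Ideal.map (E : 𝓞 k₂ →+* 𝓞 k₂) 𝔓₁' ≤ 𝔓₁' := by
        rw [hmul]; exact Ideal.mul_le_right
      rcases hP1'.mul_le.mp hle' with h' | h'
      · exact Or.inr ((hmax_map _ hP1max).eq_of_le hP1'.ne_top h')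
      · exact absurd (((hmax_map _ hP1'max).eq_of_le hP1'.ne_top h').symm.trans h1) (Ne.symm hPne)
  -- rule out the fixed case
  have hgood : Ideal.map (E : 𝓞 k₂ →+* 𝓞 k₂) 𝔓₁ = 𝔓₁' := by
    rcases hd1 with hfix | h
    · exfalso
      have hfix' : Ideal.map (E : 𝓞 k₂ →+* 𝓞 k₂) 𝔓₁' = 𝔓₁' := by
        have hle' : Ideal.map (E : 𝓞 k₂ →+* 𝓞 k₂) 𝔓₁ * Ideal.map (E : 𝓞 k₂ →+* 𝓞 k₂) 𝔓₁' ≤ 𝔓₁' := by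
          rw [hmul]; exact Ideal.mul_le_right
        rcases hP1'.mul_le.mp hle' with h' | h'
        · exact absurd (((hmax_map _ hP1max).eq_of_le hP1'.ne_top h').symm.trans hfix).symm hPne
        · exact (hmax_map _ hP1'max).eq_of_le hP1'.ne_top h'
      obtain ⟨x, hx1, hx1'⟩ : ∃ x, x ∈ 𝔓₁ ∧ x ∉ 𝔓₁' := by
        by_contra hcc
        push_neg at hcc
        exact hPne (hP1max.eq_of_le hP1'.ne_top hcc)
      set y : 𝓞 k₂ := x * E x with hy
      have hyP1 : y ∈ 𝔓₁ := Ideal.mul_mem_right _ _ hx1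
      have hσ2 : σ (σ (algebraMap (𝓞 k₂) k₂ x)) = algebraMap (𝓞 k₂) k₂ x := by
        have := congrArg (fun τ : k₂ ≃ₐ[F] k₂ => τ (algebraMap (𝓞 k₂) k₂ x)) hσσ
        simpa using this
      have hy_fix : ∀ τ : k₂ ≃ₐ[F] k₂,
          τ (algebraMap (𝓞 k₂) k₂ y) = algebraMap (𝓞 k₂) k₂ y := by
        intro τ
        rcases hdich τ with rfl | hτ
        · simp
        · rw [hτ]
          have hxx : algebraMap (𝓞 k₂) k₂ y
              = algebraMap (𝓞 k₂) k₂ x * σ (algebraMap (𝓞 k₂) k₂ x) := by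
            rw [hy, map_mul, hEcoe]
          rw [hxx, map_mul, hσ2]
          ring
      have hybot : algebraMap (𝓞 k₂) k₂ y ∈ (⊥ : IntermediateField F k₂) := by
        have hff : IntermediateField.fixedField (⊤ : Subgroup (k₂ ≃ₐ[F] k₂)) = ⊥ := by
          rw [← IntermediateField.fixingSubgroup_bot (F := F) (E := k₂), IsGalois.fixedField_fixingSubgroup]
        rw [← hff]
        exact fun g => hy_fix g
      rw [IntermediateField.mem_bot] at hybot
      obtain ⟨c, hc⟩ := hybot
      have hcint : IsIntegral ℤ c := by
        have hyi : IsIntegral ℤ (algebraMap (𝓞 k₂) k₂ y) := RingOfIntegers.isIntegral_coe y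
        rw [← hc] at hyi
        exact (isIntegral_algebraMap_iff (algebraMap F k₂).injective).mp hyi
      set r : 𝓞 F := ⟨c, hcint⟩ with hr
      have hfr : algebraMap (𝓞 F) (𝓞 k₂) r = y := by
        apply hinjS
        rw [← IsScalarTower.algebraMap_apply, IsScalarTower.algebraMap_apply (𝓞 F) F k₂]
        exact hc
      have hr1 : r ∈ 𝔭₁ := by
        rw [← hcom, Ideal.mem_comap, hfr]
        exact hyP1
      have hyP1' : y ∈ 𝔓₁' := by
        have hmm : y ∈ Ideal.map (algebraMap (𝓞 F) (𝓞 k₂)) 𝔭₁ := by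
          rw [← hfr]
          exact Ideal.mem_map_of_mem _ hr1
        exact hle1' hmm
      rcases hP1'.mem_or_mem hyP1' with h | h
      · exact hx1' h
      · rw [← hfix'] at h
        exact hx1' ((hmemE 𝔓₁' x).mp h)
    · exact h
  -- conclude
  have hgood' : Ideal.map (E.symm : 𝓞 k₂ →+* 𝓞 k₂) 𝔓₁' = 𝔓₁ := by
    rw [← hgood, Ideal.map_map]
    have h2 : (E.symm : 𝓞 k₂ →+* 𝓞 k₂).comp (E : 𝓞 k₂ →+* 𝓞 k₂) = RingHom.id _ :=
      RingHom.ext fun s => E.symm_apply_apply s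
    rw [h2, Ideal.map_id]
  constructor
  · exact fun h ε => quadResSym_transfer' k₂ 𝔓₁ 𝔓₁' E hgood h ε
  · exact fun h ε => quadResSym_transfer' k₂ 𝔓₁' 𝔓₁ E.symm hgood' h ε
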